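/- Let G be a group, let g ≥ 3, and let y, ρ, a_2,…,a_{g−1} be elements of G satisfying: ρ a_i = a_i ρ for i = 2,…,g−1; y ρ = ρ y^{−1}; and ρ² = 1. Set A = a_2 a_3 ⋯ a_{g−1}. Then: (i) if g is odd, the relation (y^{−1} A y A)^{(g−1)/2} = 1 holds if and only if (y ρ A)^{g−1} = 1; and (ii) if g is even, the relation (y^{−1} A y A)^{(g−2)/2} y^{−1} A = ρ holds if and only if (y ρ A)^{g−1} = 1. -/

import Mathlib

/-- relations (Fa) (for `g` odd) and (Fb) (for `g` even) are each
equivalent to relation (F') `(yρa₂⋯a_{g-1})^(g-1) = 1`. -/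
theorem stmt_18 {G : Type*} [Group G] (g : ℕ) (hg : 3 ≤ g) (a : ℕ → G) (y ρ : G)
    (hρa : ∀ i, 2 ≤ i → i ≤ g - 1 → ρ * a i = a i * ρ)
    (hyρ : y * ρ = ρ * y⁻¹)
    (hρ2 : ρ ^ 2 = 1)
    (A : G) (hA : A = ((List.range' 2 (g - 2)).map a).prod) :
    (Odd g → ((y⁻¹ * A * y * A) ^ ((g - 1) / 2) = 1 ↔ (y * ρ * A) ^ (g - 1) = 1)) ∧
    (Even g → ((y⁻¹ * A * y * A) ^ ((g - 2) / 2) * y⁻¹ * A = ρ ↔ (y * ρ * A) ^ (g - 1) = 1)) := by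
  -- ρ commutes with A
  have hρA : ρ * A = A * ρ := by
    subst hA
    refine (Commute.list_prod_right _ _ ?_)
    intro x hx
    simp only [List.mem_map] at hx
    obtain ⟨i, hi, rfl⟩ := hx
    rw [List.mem_range'_1] at hi
    exact hρa i hi.1 (by omega)
  have hρinv : ρ⁻¹ = ρ := by
    rw [inv_eq_iff_mul_eq_one, ← sq, hρ2]
  have hρy : ρ * y = y⁻¹ * ρ := by
    have h2 : ρ = y⁻¹ * (y * ρ) := by group
    rw [hyρ] at h2
    calc ρ * y = y⁻¹ * (ρ * y⁻¹) * y := by rw [← h2]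
    _ = y⁻¹ * ρ := by group
  have c1 : ∀ t : G, ρ * (A * t) = A * (ρ * t) := fun t => by
    rw [← mul_assoc, hρA, mul_assoc]
  have c2 : ∀ t : G, ρ * (y * t) = y⁻¹ * (ρ * t) := fun t => by
    rw [← mul_assoc, hρy, mul_assoc]
  have c4 : ∀ t : G, ρ * (ρ * t) = t := fun t => by
    rw [← mul_assoc, ← sq, hρ2, one_mul]
  have c5 : ρ * A⁻¹ = A⁻¹ * ρ := (Commute.inv_right hρA).eq
  have c5' : ∀ t : G, ρ * (A⁻¹ * t) = A⁻¹ * (ρ * t) := fun t => by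
    rw [← mul_assoc, c5, mul_assoc]
  -- key computation: (yρA)² = yAy⁻¹A
  have hx2 : (y * ρ * A) ^ 2 = y * A * y⁻¹ * A := by
    simp only [pow_succ, pow_zero, one_mul, mul_assoc, c1, c2, c4]
  -- conjugation relation
  have hconj : ∀ n : ℕ, (y⁻¹ * A * y * A) ^ n
      = (y * A)⁻¹ * ((y * ρ * A) ^ 2) ^ n * ((y * A)⁻¹)⁻¹ := by
    intro n
    rw [← conj_pow]
    congr 1
    rw [hx2]
    group
  refine ⟨?_, ?_⟩
  · intro hodd
    obtain ⟨m, hm⟩ := hodd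
    have h1 : (g - 1) / 2 = m := by omega
    have h2 : g - 1 = 2 * m := by omega
    rw [h1, h2, hconj m, pow_mul, inv_inv, mul_assoc, inv_mul_eq_one, eq_comm,
      mul_eq_right]
  · intro heven
    obtain ⟨m, hm⟩ := heven
    have h1 : (g - 2) / 2 = m - 1 := by omega
    have h2 : g - 1 = 2 * (m - 1) + 1 := by omega
    rw [h1, h2]
    set k := m - 1 with hk
    set w := y⁻¹ * A * y * A with hw
    set c := y * A with hc
    set x := y * ρ * A with hx
    have hxpow : x ^ (2 * k + 1) = c * w ^ k * c⁻¹ * x := by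
      rw [pow_succ, pow_mul, hconj k, inv_inv]
      group
    have hkey : c⁻¹ * x⁻¹ * c = ρ * A⁻¹ * y := by
      rw [hc, hx]
      simp only [mul_inv_rev, hρinv, mul_assoc, inv_mul_cancel_left, c5', hρy, hρA,
        inv_mul_cancel_left]
    have left_iff : w ^ k * y⁻¹ * A = ρ ↔ w ^ k = ρ * A⁻¹ * y := by
      constructor <;> intro h
      · rw [← h]; group
      · rw [h]; group
    have right_iff : x ^ (2 * k + 1) = 1 ↔ w ^ k = c⁻¹ * x⁻¹ * c := by
      rw [hxpow]
      constructor <;> intro h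
      · rw [mul_eq_one_iff_eq_inv] at h
        rw [← h]; group
      · rw [h]; group
    rw [left_iff, right_iff, hkey]
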